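/- Let ℓ ≥ 1, let F be an ℓ-uniform hypergraph on the vertex set Z/nZ with maximum vertex degree at most D, and let U be a random subset of Z/nZ where each element is included independently with probability p. Then with probability at least 1 − 2Dn^{−4}, the number of edges of F entirely contained in U is at most 5D(p^ℓ n/ℓ + log n). -/

import Mathlib

set_option linter.unusedSectionVars false
set_option maxHeartbeats 1000000

open MeasureTheory Finset
open scoped ENNReal


/-- The Bernoulli measure with parameter `p` (truncated to `[0,1]`) on `Bool`. -/
noncomputable def bernoulliMeasure (p : ℝ) : MeasureTheory.Measure Bool :=
  (PMF.bernoulli (min (Real.toNNReal p) 1) (min_le_right _ _)).toMeasure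

/-- The law of the binomial random subset `Z_{n,p}` of `ZMod n`, encoded as a random
indicator function `ZMod n → Bool` with i.i.d. Bernoulli(p) coordinates. -/
noncomputable def binomMeasure (n : ℕ) [NeZero n] (p : ℝ) :
    MeasureTheory.Measure (ZMod n → Bool) :=
  MeasureTheory.Measure.pi fun _ => bernoulliMeasure p

instance (p : ℝ) : IsProbabilityMeasure (bernoulliMeasure p) :=
  PMF.toMeasure.isProbabilityMeasure _

instance (n : ℕ) [NeZero n] (p : ℝ) : IsProbabilityMeasure (binomMeasure n p) := by
  unfold binomMeasure; infer_instance

lemma bernoulliMeasure_true {p : ℝ} (hp1 : p ≤ 1) :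
    bernoulliMeasure p {true} = ENNReal.ofReal p := by
  rw [bernoulliMeasure, PMF.toMeasure_apply_singleton _ _ (measurableSet_singleton _)]
  simp [PMF.bernoulli_apply, min_eq_left (Real.toNNReal_le_one.mpr hp1), ENNReal.ofReal]

lemma binomMeasure_cyl {n : ℕ} [NeZero n] {p : ℝ} (hp1 : p ≤ 1) (e : Finset (ZMod n)) :
    binomMeasure n p {ω | ∀ v ∈ e, ω v = true} = ENNReal.ofReal p ^ e.card := by
  classical
  have hset : {ω : ZMod n → Bool | ∀ v ∈ e, ω v = true}
      = Set.pi Set.univ (fun v => if v ∈ e then ({true} : Set Bool) else Set.univ) := by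
    ext ω
    simp only [Set.mem_setOf_eq, Set.mem_pi, Set.mem_univ, forall_true_left]
    constructor
    · intro h v
      by_cases hv : v ∈ e
      · simp [hv, h v hv]
      · simp [hv]
    · intro h v hv
      have := h v
      simpa [hv] using this
  rw [binomMeasure, hset, MeasureTheory.Measure.pi_pi]
  have hval : ∀ v : ZMod n,
      bernoulliMeasure p (if v ∈ e then ({true} : Set Bool) else Set.univ)
        = if v ∈ e then ENNReal.ofReal p else 1 := by
    intro v
    by_cases hv : v ∈ e
    · rw [if_pos hv, if_pos hv, bernoulliMeasure_true hp1]
    · rw [if_neg hv, if_neg hv, measure_univ]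
  simp_rw [hval]
  rw [← Finset.prod_filter_mul_prod_filter_not Finset.univ (· ∈ e)]
  rw [Finset.filter_univ_mem]
  rw [Finset.prod_congr rfl (fun v hv => if_pos hv), Finset.prod_const,
    Finset.prod_congr rfl (fun v hv => if_neg (Finset.mem_filter.mp hv).2), Finset.prod_const,
    one_pow, mul_one]



noncomputable section FinnerSection

variable {δ : Type*} [DecidableEq δ] {π : δ → Type*} [∀ i, MeasurableSpace (π i)]
  {μ : ∀ i, MeasureTheory.Measure (π i)} [∀ i, IsProbabilityMeasure (μ i)]

/-- `f` depends only on coordinates in `s`. -/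
def FDepOn (f : (∀ i, π i) → ℝ≥0∞) (s : Finset δ) : Prop :=
  ∀ ⦃x y : ∀ i, π i⦄, (∀ i ∈ s, x i = y i) → f x = f y

lemma FDepOn.update_eq {f : (∀ i, π i) → ℝ≥0∞} {A : Finset δ} (hf : FDepOn f A)
    {v : δ} (hv : v ∉ A) (x : ∀ i, π i) (xv : π v) :
    f (Function.update x v xv) = f x :=
  hf (fun i hi => Function.update_of_ne (fun h => hv (by rwa [h] at hi)) _ _)

lemma FDepOn.rpow {f : (∀ i, π i) → ℝ≥0∞} {A : Finset δ} (hf : FDepOn f A) (r : ℝ) :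
    FDepOn (fun x => f x ^ r) A := fun x y h => by simp only [hf h]

lemma FDepOn.lmarginal [∀ i, SigmaFinite (μ i)] {f : (∀ i, π i) → ℝ≥0∞} {A : Finset δ}
    (hf : FDepOn f A) (s : Finset δ) :
    FDepOn (∫⋯∫⁻_s, f ∂μ) (A \ s) := by
  intro x y h
  apply lintegral_congr
  intro z
  apply hf
  intro i hi
  by_cases his : i ∈ s
  · simp [Function.updateFinset, his]
  · simpa [Function.updateFinset, his] using h i (Finset.mem_sdiff.mpr ⟨hi, his⟩)

lemma FDepOn.lmarginal_eq_lintegral [Fintype δ] [∀ i, SigmaFinite (μ i)]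
    {f : (∀ i, π i) → ℝ≥0∞} {A : Finset δ}
    (hf : Measurable f) (hdep : FDepOn f A) (x : ∀ i, π i) :
    (∫⋯∫⁻_A, f ∂μ) x = ∫⁻ ω, f ω ∂MeasureTheory.Measure.pi μ := by
  have h1 : (∫⋯∫⁻_(Finset.univ \ A), f ∂μ) = f := by
    ext1 y
    have h2 : ∀ z, f (Function.updateFinset y (Finset.univ \ A) z) = f y := by
      intro z
      apply hdep
      intro i hi
      have : i ∉ Finset.univ \ A := by simp [Finset.mem_sdiff, hi]
      simp [Function.updateFinset, this]
    simp only [MeasureTheory.lmarginal, h2]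
    simp [lintegral_const]
  rw [lintegral_eq_lmarginal_univ (μ := μ) x,
    ← Finset.union_sdiff_of_subset (Finset.subset_univ A),
    lmarginal_union μ f hf Finset.disjoint_sdiff, h1]

end FinnerSection


/-- Hölder: for a probability measure and at most `D` functions,
`∫ ∏ h_k ≤ ∏ (∫ h_k^D)^(1/D)`. -/
lemma lintegral_prod_le_card {α ι' : Type*} [MeasurableSpace α] {ν : MeasureTheory.Measure α}
    [IsProbabilityMeasure ν] (t : Finset ι') (h : ι' → α → ℝ≥0∞)
    (hmeas : ∀ k ∈ t, Measurable (h k)) {D : ℕ} (hD : 0 < D) (hcard : t.card ≤ D) :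
    ∫⁻ a, ∏ k ∈ t, h k a ∂ν ≤ ∏ k ∈ t, (∫⁻ a, h k a ^ (D : ℝ) ∂ν) ^ (1 / (D : ℝ)) := by
  classical
  have hD0 : (D : ℝ) ≠ 0 := Nat.cast_ne_zero.mpr hD.ne'
  have hDpos : (0 : ℝ) < D := Nat.cast_pos.mpr hD
  set s : Finset (Option ι') := insert none (t.map Function.Embedding.some) with hs
  have hnone : none ∉ t.map Function.Embedding.some := by simp
  set f : Option ι' → α → ℝ≥0∞ := fun o a => Option.elim o 1 (fun k => h k a ^ (D : ℝ)) with hf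
  set P : Option ι' → ℝ := fun o => Option.elim o (1 - t.card / D) (fun _ => 1 / (D : ℝ)) with hP
  have hsum : ∑ o ∈ s, P o = 1 := by
    rw [hs, Finset.sum_insert hnone, Finset.sum_map]
    simp only [hP, Option.elim, Function.Embedding.some_apply, Finset.sum_const, nsmul_eq_mul]
    field_simp
    ring
  have hnn : ∀ o ∈ s, 0 ≤ P o := by
    rintro (_ | k) _
    · simp only [hP, Option.elim]
      rw [sub_nonneg, div_le_one hDpos]
      exact_mod_cast hcard
    · simp only [hP, Option.elim]
      positivity
  have hmeas' : ∀ o ∈ s, AEMeasurable (f o) ν := by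
    rintro (_ | k) ho
    · exact aemeasurable_const
    · have hk : k ∈ t := by
        simp only [hs, Finset.mem_insert, Finset.mem_map, Function.Embedding.some_apply,
          Option.some.injEq, reduceCtorEq, false_or] at ho
        obtain ⟨a, ha, rfl⟩ := ho
        exact ha
      exact ((hmeas k hk).pow measurable_const).aemeasurable
  have key := ENNReal.lintegral_prod_norm_pow_le (μ := ν) s hmeas' hsum hnn
  have hL : ∀ a, ∏ o ∈ s, f o a ^ P o = ∏ k ∈ t, h k a := by
    intro a
    rw [hs, Finset.prod_insert hnone, Finset.prod_map]
    simp only [hf, hP, Option.elim, Function.Embedding.some_apply, ENNReal.one_rpow, one_mul]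
    refine Finset.prod_congr rfl fun k _ => ?_
    rw [← ENNReal.rpow_mul, mul_one_div_cancel hD0, ENNReal.rpow_one]
  have hR : ∏ o ∈ s, (∫⁻ a, f o a ∂ν) ^ P o
      = ∏ k ∈ t, (∫⁻ a, h k a ^ (D : ℝ) ∂ν) ^ (1 / (D : ℝ)) := by
    rw [hs, Finset.prod_insert hnone, Finset.prod_map]
    simp only [hf, hP, Option.elim, Function.Embedding.some_apply]
    rw [lintegral_one, measure_univ, ENNReal.one_rpow, one_mul]
  calc ∫⁻ a, ∏ k ∈ t, h k a ∂ν = ∫⁻ a, ∏ o ∈ s, f o a ^ P o ∂ν := by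
        simp_rw [hL]
    _ ≤ ∏ o ∈ s, (∫⁻ a, f o a ∂ν) ^ P o := key
    _ = _ := hR


section Finner

variable {δ : Type*} [DecidableEq δ] {π : δ → Type*} [∀ i, MeasurableSpace (π i)]
  {μ : ∀ i, MeasureTheory.Measure (π i)} [∀ i, IsProbabilityMeasure (μ i)]

lemma finner_marginal {ι' : Type*} (K : Finset ι') (A : ι' → Finset δ)
    (g : ι' → (∀ i, π i) → ℝ≥0∞) (hgm : ∀ k, Measurable (g k))
    (hdep : ∀ k ∈ K, FDepOn (g k) (A k)) {D : ℕ} (hD : 0 < D)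
    (hdeg : ∀ i : δ, (K.filter (fun k => i ∈ A k)).card ≤ D)
    (s : Finset δ) (x : ∀ i, π i) :
    (∫⋯∫⁻_s, (fun ω => ∏ k ∈ K, g k ω) ∂μ) x
      ≤ ∏ k ∈ K, ((∫⋯∫⁻_(s ∩ A k), (fun ω => g k ω ^ (D : ℝ)) ∂μ) x) ^ (1 / (D : ℝ)) := by
  classical
  have hD0 : (D : ℝ) ≠ 0 := Nat.cast_ne_zero.mpr hD.ne'
  induction s using Finset.induction generalizing x with
  | empty =>
    simp only [MeasureTheory.lmarginal_empty, Finset.empty_inter]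
    refine le_of_eq (Finset.prod_congr rfl fun k _ => ?_).symm
    rw [← ENNReal.rpow_mul, mul_one_div_cancel hD0, ENNReal.rpow_one]
  | @insert v s hv ih =>
    have hmprod : Measurable fun ω => ∏ k ∈ K, g k ω :=
      Finset.measurable_prod K (fun k _ => hgm k)
    have hmgD : ∀ k, Measurable fun ω => g k ω ^ (D : ℝ) :=
      fun k => (hgm k).pow measurable_const
    -- the partially-integrated factors
    set H : ι' → (∀ i, π i) → ℝ≥0∞ := fun k => (∫⋯∫⁻_(s ∩ A k), (fun ω => g k ω ^ (D : ℝ)) ∂μ)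
      with hH
    have hmH : ∀ k, Measurable (H k) := fun k => Measurable.lmarginal μ (hmgD k)
    rw [MeasureTheory.lmarginal_insert _ hmprod hv]
    have step1 : ∫⁻ xv, (∫⋯∫⁻_s, (fun ω => ∏ k ∈ K, g k ω) ∂μ) (Function.update x v xv) ∂μ v
        ≤ ∫⁻ xv, ∏ k ∈ K, (H k (Function.update x v xv)) ^ (1 / (D : ℝ)) ∂μ v :=
      lintegral_mono fun xv => ih (Function.update x v xv)
    refine step1.trans ?_
    set Kv : Finset ι' := K.filter (fun k => v ∈ A k) with hKv
    set C : ℝ≥0∞ := ∏ k ∈ K.filter (fun k => ¬ v ∈ A k), (H k x) ^ (1 / (D : ℝ)) with hC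
    have hsplit : ∀ xv, ∏ k ∈ K, (H k (Function.update x v xv)) ^ (1 / (D : ℝ))
        = (∏ k ∈ Kv, (H k (Function.update x v xv)) ^ (1 / (D : ℝ))) * C := by
      intro xv
      rw [← Finset.prod_filter_mul_prod_filter_not K (fun k => v ∈ A k)]
      congr 1
      refine Finset.prod_congr rfl fun k hk => ?_
      have hk' := Finset.mem_filter.mp hk
      have hdepk : FDepOn (H k) (A k \ (s ∩ A k)) :=
        FDepOn.lmarginal ((hdep k hk'.1).rpow (D : ℝ)) _
      have hvne : v ∉ A k \ (s ∩ A k) := fun hmem => hk'.2 (Finset.mem_sdiff.mp hmem).1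
      rw [hdepk.update_eq hvne x xv]
    simp_rw [hsplit]
    have hmKv : Measurable fun xv => ∏ k ∈ Kv, (H k (Function.update x v xv)) ^ (1 / (D : ℝ)) :=
      Finset.measurable_prod _ fun k _ =>
        ((hmH k).comp (measurable_update x)).pow measurable_const
    rw [lintegral_mul_const C hmKv]
    have holder : ∫⁻ xv, ∏ k ∈ Kv, (H k (Function.update x v xv)) ^ (1 / (D : ℝ)) ∂μ v
        ≤ ∏ k ∈ Kv, (∫⁻ xv, ((H k (Function.update x v xv)) ^ (1 / (D : ℝ))) ^ (D : ℝ) ∂μ v)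
            ^ (1 / (D : ℝ)) := by
      refine lintegral_prod_le_card Kv _ (fun k _ => ?_) hD (hdeg v)
      exact ((hmH k).comp (measurable_update x)).pow measurable_const
    have hcancel : ∀ k, ∀ xv, ((H k (Function.update x v xv)) ^ (1 / (D : ℝ))) ^ (D : ℝ)
        = H k (Function.update x v xv) := by
      intro k xv
      rw [← ENNReal.rpow_mul, one_div_mul_cancel hD0, ENNReal.rpow_one]
    simp_rw [hcancel] at holder
    have hins : ∀ k ∈ Kv, ∫⁻ xv, H k (Function.update x v xv) ∂μ v
        = (∫⋯∫⁻_((insert v s) ∩ A k), (fun ω => g k ω ^ (D : ℝ)) ∂μ) x := by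
      intro k hk
      have hkv : v ∈ A k := (Finset.mem_filter.mp hk).2
      have hvns : v ∉ s ∩ A k := fun hmem => hv (Finset.mem_inter.mp hmem).1
      rw [hH, ← MeasureTheory.lmarginal_insert _ (hmgD k) hvns, Finset.insert_inter_of_mem hkv]
    have hCeq : C = ∏ k ∈ K.filter (fun k => ¬ v ∈ A k),
        ((∫⋯∫⁻_((insert v s) ∩ A k), (fun ω => g k ω ^ (D : ℝ)) ∂μ) x) ^ (1 / (D : ℝ)) := by
      refine Finset.prod_congr rfl fun k hk => ?_
      have hkv : v ∉ A k := (Finset.mem_filter.mp hk).2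
      rw [hH, Finset.insert_inter_of_notMem hkv]
    calc (∫⁻ xv, ∏ k ∈ Kv, (H k (Function.update x v xv)) ^ (1 / (D : ℝ)) ∂μ v) * C
        ≤ (∏ k ∈ Kv, (∫⁻ xv, H k (Function.update x v xv) ∂μ v) ^ (1 / (D : ℝ))) * C :=
          mul_le_mul_left holder C
      _ = ∏ k ∈ K, ((∫⋯∫⁻_((insert v s) ∩ A k), (fun ω => g k ω ^ (D : ℝ)) ∂μ) x)
            ^ (1 / (D : ℝ)) := by
          rw [hCeq, ← Finset.prod_filter_mul_prod_filter_not K (fun k => v ∈ A k)]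
          congr 1
          exact Finset.prod_congr rfl fun k hk => by rw [hins k hk]

theorem finner_lintegral [Fintype δ] [∀ i, Nonempty (π i)] {ι' : Type*} (K : Finset ι')
    (A : ι' → Finset δ) (g : ι' → (∀ i, π i) → ℝ≥0∞) (hgm : ∀ k, Measurable (g k))
    (hdep : ∀ k ∈ K, FDepOn (g k) (A k)) {D : ℕ} (hD : 0 < D)
    (hdeg : ∀ i : δ, (K.filter (fun k => i ∈ A k)).card ≤ D) :
    ∫⁻ ω, ∏ k ∈ K, g k ω ∂(MeasureTheory.Measure.pi μ)
      ≤ ∏ k ∈ K, (∫⁻ ω, g k ω ^ (D : ℝ) ∂(MeasureTheory.Measure.pi μ)) ^ (1 / (D : ℝ)) := by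
  classical
  have x : ∀ i, π i := fun i => Classical.arbitrary (π i)
  rw [lintegral_eq_lmarginal_univ (μ := μ) x]
  refine (finner_marginal K A g hgm hdep hD hdeg Finset.univ x).trans (le_of_eq ?_)
  refine Finset.prod_congr rfl fun k hk => ?_
  congr 1
  rw [Finset.univ_inter]
  exact FDepOn.lmarginal_eq_lintegral ((hgm k).pow measurable_const) ((hdep k hk).rpow (D:ℝ)) x


lemma real_est (n ℓ D m : ℕ) (hn : 2 ≤ n) (hℓ : 1 ≤ ℓ) (hD : 1 ≤ D) (q : ℝ) (hq0 : 0 ≤ q)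
    (hcount : (m : ℝ) * ℓ ≤ (n : ℝ) * D) :
    (1 + 4 * q) ^ ((m : ℝ) / D) / (5 : ℝ) ^ ((5 * D * (q * n / ℓ + Real.log n)) / D)
      ≤ 2 * D * (n : ℝ) ^ (-4 : ℤ) := by
  have hD0 : (0:ℝ) < D := by exact_mod_cast Nat.lt_of_lt_of_le Nat.zero_lt_one hD
  have hℓ0 : (0:ℝ) < ℓ := by exact_mod_cast Nat.lt_of_lt_of_le Nat.zero_lt_one hℓ
  have hn1 : (1:ℝ) ≤ n := by exact_mod_cast Nat.one_le_of_lt hn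
  have hn0 : (0:ℝ) < n := lt_of_lt_of_le one_pos hn1
  have hL0 : 0 ≤ Real.log n := Real.log_nonneg hn1
  set M : ℝ := q * n / ℓ with hM
  have hM0 : 0 ≤ M := by positivity
  have hAD : (5 * D * (M + Real.log n)) / D = 5 * (M + Real.log n) := by
    field_simp
  have hqm : q * m ≤ D * M := by
    have hm : (m:ℝ) ≤ n * D / ℓ := by
      rw [le_div_iff₀ hℓ0]; linarith [hcount]
    calc q * m ≤ q * (n * D / ℓ) := mul_le_mul_of_nonneg_left hm hq0
      _ = D * M := by rw [hM]; field_simp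
  have h1 : (1 + 4 * q) ^ ((m:ℝ)/D) ≤ Real.exp (4 * M) := by
    rw [Real.rpow_def_of_pos (by positivity)]
    apply Real.exp_le_exp.mpr
    have hlog : Real.log (1 + 4*q) ≤ 4*q := by
      have := Real.log_le_sub_one_of_pos (show (0:ℝ) < 1 + 4*q by positivity)
      linarith
    have hmD0 : 0 ≤ (m:ℝ)/D := by positivity
    calc Real.log (1 + 4*q) * ((m:ℝ)/D) ≤ (4*q) * ((m:ℝ)/D) :=
          mul_le_mul_of_nonneg_right hlog hmD0
      _ = 4*(q*m)/D := by ring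
      _ ≤ 4*(D*M)/D := by gcongr
      _ = 4*M := by field_simp
  have hlog5 : 1 ≤ Real.log 5 := by
    rw [Real.le_log_iff_exp_le (by norm_num)]
    calc Real.exp 1 ≤ 2.7182818286 := Real.exp_one_lt_d9.le
      _ ≤ 5 := by norm_num
  have h2 : (5:ℝ) ^ ((5 * D * (M + Real.log n)) / D)
      = Real.exp ((5*(M + Real.log n)) * Real.log 5) := by
    rw [hAD, Real.rpow_def_of_pos (by norm_num), mul_comm]
  calc (1 + 4 * q) ^ ((m : ℝ) / D) / (5 : ℝ) ^ ((5 * D * (M + Real.log n)) / D)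
      ≤ Real.exp (4*M) / Real.exp ((5*(M + Real.log n)) * Real.log 5) := by
        rw [h2]
        gcongr
    _ = Real.exp (4*M - 5*(M + Real.log n) * Real.log 5) := by rw [← Real.exp_sub]
    _ ≤ Real.exp (-(5 * Real.log n)) := by
        apply Real.exp_le_exp.mpr
        nlinarith [hM0, hL0, hlog5]
    _ = ((n:ℝ) ^ (5:ℕ))⁻¹ := by
        rw [show -(5 * Real.log n) = Real.log n * (-5) by ring, ← Real.rpow_def_of_pos hn0,
          show (-5:ℝ) = -((5:ℕ):ℝ) by norm_num, Real.rpow_neg hn0.le, Real.rpow_natCast]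
    _ ≤ 2 * D * (n:ℝ) ^ (-4 : ℤ) := by
        have h4 : (n:ℝ) ^ (-4:ℤ) = ((n:ℝ) ^ (4:ℕ))⁻¹ := by
          rw [zpow_neg]
          norm_cast
        rw [h4, pow_succ, mul_inv]
        have hinv : ((n:ℝ))⁻¹ ≤ 2 * D := by
          have h1n : (n:ℝ)⁻¹ ≤ 1 := by
            rw [inv_le_one₀ hn0]
            exact hn1
          have h2D : (1:ℝ) ≤ 2 * D := by
            have : (1:ℝ) ≤ D := by exact_mod_cast hD
            linarith
          linarith
        calc ((n:ℝ)^(4:ℕ))⁻¹ * ((n:ℝ))⁻¹ ≤ ((n:ℝ)^(4:ℕ))⁻¹ * (2*D) :=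
              mul_le_mul_of_nonneg_left hinv (by positivity)
          _ = 2*D*((n:ℝ)^(4:ℕ))⁻¹ := by ring

lemma final_step {α : Type*} [MeasurableSpace α] (μ : MeasureTheory.Measure α)
    [IsProbabilityMeasure μ] (S : Set α) (hS : MeasurableSet S) (β : ℝ) (hβ0 : 0 ≤ β)
    (h : μ Sᶜ ≤ ENNReal.ofReal β) : ENNReal.ofReal (1 - β) ≤ μ S := by
  rcases le_or_gt 1 β with hβ | hβ
  · rw [ENNReal.ofReal_eq_zero.mpr (by linarith)]
    exact bot_le
  · have hadd := measure_add_measure_compl (μ := μ) hS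
    rw [measure_univ] at hadd
    have h1 : ENNReal.ofReal (1 - β) + ENNReal.ofReal β = 1 := by
      rw [← ENNReal.ofReal_add (by linarith) hβ0]
      norm_num
    have h2 : ENNReal.ofReal (1 - β) + μ Sᶜ ≤ μ S + μ Sᶜ := by
      rw [hadd, ← h1]
      exact add_le_add_right h _
    exact (ENNReal.add_le_add_iff_right (measure_ne_top μ _)).mp h2

/-- double counting -/
lemma count_edges {n ℓ D : ℕ} [NeZero n] (F : Finset (Finset (ZMod n)))
    (hunif : ∀ e ∈ F, e.card = ℓ)
    (hdeg : ∀ v : ZMod n, (F.filter (fun e => v ∈ e)).card ≤ D) :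
    F.card * ℓ ≤ n * D := by
  classical
  have h1 : ∑ e ∈ F, e.card = ∑ v : ZMod n, (F.filter (fun e => v ∈ e)).card := by
    simp_rw [Finset.card_filter]
    rw [Finset.sum_comm]
    refine Finset.sum_congr rfl fun e _ => ?_
    rw [Finset.card_eq_sum_ones e]
    rw [← Finset.sum_filter]
    refine (Finset.sum_congr ?_ fun _ _ => rfl)
    ext v; simp
  have h2 : ∑ e ∈ F, e.card = F.card * ℓ := by
    rw [Finset.sum_congr rfl hunif, Finset.sum_const, smul_eq_mul]
  have h3 : ∑ v : ZMod n, (F.filter (fun e => v ∈ e)).card ≤ ∑ _v : ZMod n, D :=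
    Finset.sum_le_sum fun v _ => hdeg v
  rw [Finset.sum_const, smul_eq_mul, Finset.card_univ, ZMod.card] at h3
  omega

open scoped Classical in
theorem stmt_4 (n ℓ D : ℕ) [NeZero n] (hn : 2 ≤ n) (hℓ : 1 ≤ ℓ) (p : ℝ)
    (hp0 : 0 ≤ p) (hp1 : p ≤ 1)
    (F : Finset (Finset (ZMod n))) (hunif : ∀ e ∈ F, e.card = ℓ)
    (hdeg : ∀ v : ZMod n, (F.filter (fun e => v ∈ e)).card ≤ D) :
    ENNReal.ofReal (1 - 2 * D * (n : ℝ) ^ (-4 : ℤ)) ≤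
      binomMeasure n p {ω | ((F.filter (fun e => ∀ v ∈ e, ω v = true)).card : ℝ)
        ≤ 5 * D * (p ^ ℓ * n / ℓ + Real.log n)} := by
  classical
  by_cases hD0 : D = 0
  · subst hD0
    have hF : F = ∅ := by
      by_contra hF
      obtain ⟨e, he⟩ := Finset.nonempty_iff_ne_empty.mpr hF
      have hcard := hunif e he
      have hpos : 0 < e.card := by omega
      obtain ⟨v, hv⟩ := Finset.card_pos.mp hpos
      have h1 : 0 < (F.filter (fun e => v ∈ e)).card :=
        Finset.card_pos.mpr ⟨e, Finset.mem_filter.mpr ⟨he, hv⟩⟩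
      have := hdeg v
      omega
    have huniv : {ω : ZMod n → Bool | ((F.filter (fun e => ∀ v ∈ e, ω v = true)).card : ℝ)
        ≤ 5 * (0:ℕ) * (p ^ ℓ * n / ℓ + Real.log n)} = Set.univ := by
      ext ω
      simp [hF]
    rw [huniv, measure_univ]
    simp
  · -- main case
    have hD1 : 1 ≤ D := Nat.one_le_iff_ne_zero.mpr hD0
    have hDR : (0:ℝ) < D := by exact_mod_cast Nat.pos_of_ne_zero hD0
    have hDne : (D:ℝ) ≠ 0 := ne_of_gt hDR
    set q : ℝ := p ^ ℓ with hq
    have hq0 : 0 ≤ q := pow_nonneg hp0 ℓ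
    set A : ℝ := 5 * D * (p ^ ℓ * n / ℓ + Real.log n) with hA
    have hL0 : 0 ≤ Real.log n := Real.log_nonneg (by exact_mod_cast le_trans (by norm_num) hn)
    have hA0 : 0 ≤ A := by
      have hM0 : 0 ≤ p ^ ℓ * n / ℓ := by positivity
      have : 0 ≤ (p ^ ℓ * n / ℓ + Real.log n) := by linarith
      positivity
    set X : (ZMod n → Bool) → ℕ := fun ω => (F.filter (fun e => ∀ v ∈ e, ω v = true)).card
      with hX
    set S : Set (ZMod n → Bool) := {ω | ((X ω : ℕ) : ℝ) ≤ A} with hS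
    refine final_step _ S .of_discrete _ (by positivity) ?_
    -- bound μ Sᶜ
    set Y : ℝ≥0∞ := (5 : ℝ≥0∞) ^ (1 / (D:ℝ)) with hY
    set g : Finset (ZMod n) → (ZMod n → Bool) → ℝ≥0∞ :=
      fun e ω => if ∀ v ∈ e, ω v = true then Y else 1 with hg
    set f : (ZMod n → Bool) → ℝ≥0∞ := fun ω => (5 : ℝ≥0∞) ^ (((X ω : ℕ) : ℝ) / D) with hf
    have hprod : ∀ ω, ∏ e ∈ F, g e ω = f ω := by
      intro ω
      rw [← Finset.prod_filter_mul_prod_filter_not F (fun e => ∀ v ∈ e, ω v = true)]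
      rw [Finset.prod_congr rfl (fun e he => if_pos (Finset.mem_filter.mp he).2),
        Finset.prod_const,
        Finset.prod_congr rfl (fun e he => if_neg (Finset.mem_filter.mp he).2),
        Finset.prod_const, one_pow, mul_one]
      rw [hf, hY, ← ENNReal.rpow_natCast ((5:ℝ≥0∞) ^ (1/(D:ℝ))) (X ω), ← ENNReal.rpow_mul]
      congr 1
      field_simp
    set c : ℝ≥0∞ := (5 : ℝ≥0∞) ^ ((A / D : ℝ)) with hc
    have hc0 : c ≠ 0 :=
      ne_of_gt (ENNReal.rpow_pos (by norm_num) (by norm_num))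
    have hctop : c ≠ ⊤ := by
      rw [hc]
      exact ENNReal.rpow_ne_top_of_nonneg (by positivity) (by norm_num)
    have hsub : Sᶜ ⊆ {ω | c ≤ f ω} := by
      intro ω hω
      simp only [hS, Set.mem_compl_iff, Set.mem_setOf_eq, not_le] at hω
      have h1 : A / D ≤ ((X ω : ℕ) : ℝ) / D := by
        gcongr
      exact ENNReal.rpow_le_rpow_of_exponent_le (by norm_num) h1
    have hmarkov : binomMeasure n p Sᶜ ≤ (∫⁻ ω, f ω ∂binomMeasure n p) / c := by
      refine le_trans (measure_mono hsub) ?_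
      exact meas_ge_le_lintegral_div Measurable.of_discrete.aemeasurable hc0 hctop
    have hpi : binomMeasure n p = MeasureTheory.Measure.pi (fun _ : ZMod n => bernoulliMeasure p) :=
      rfl
    have hgm : ∀ e, Measurable (g e) := fun e => Measurable.of_discrete
    have hdepg : ∀ e ∈ F, FDepOn (g e) (id e) := by
      intro e _ x y h
      have hiff : (∀ v ∈ e, x v = true) ↔ (∀ v ∈ e, y v = true) := by
        constructor <;> intro hh v hv
        · rw [← h v hv]; exact hh v hv
        · rw [h v hv]; exact hh v hv
      simp only [hg]
      exact if_congr hiff rfl rfl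
    have hdeg' : ∀ v : ZMod n, (F.filter (fun e => v ∈ id e)).card ≤ D := by
      simpa using hdeg
    have hfinner := finner_lintegral (μ := fun _ : ZMod n => bernoulliMeasure p) F id g hgm
      hdepg (Nat.pos_of_ne_zero hD0) hdeg'
    have hgD : ∀ e, (fun ω => g e ω ^ (D:ℝ))
        = fun ω => if ∀ v ∈ e, ω v = true then (5:ℝ≥0∞) else 1 := by
      intro e; funext ω
      by_cases hcond : ∀ v ∈ e, ω v = true
      · simp only [hg, if_pos hcond, hY]
        rw [← ENNReal.rpow_mul, one_div_mul_cancel hDne, ENNReal.rpow_one]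
      · simp only [hg, if_neg hcond, ENNReal.one_rpow]
    have hcylint : ∀ e ∈ F, ∫⁻ ω, g e ω ^ (D:ℝ)
        ∂(MeasureTheory.Measure.pi (fun _ : ZMod n => bernoulliMeasure p))
        = 1 + 4 * ENNReal.ofReal q := by
      intro e he
      rw [hgD e]
      have hind : (fun ω : ZMod n → Bool => if ∀ v ∈ e, ω v = true then (5:ℝ≥0∞) else 1)
          = fun ω => 1 + Set.indicator {ω : ZMod n → Bool | ∀ v ∈ e, ω v = true}
              (fun _ => 4) ω := by
        funext ω
        by_cases hcond : ∀ v ∈ e, ω v = true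
        · rw [if_pos hcond, Set.indicator_of_mem (show ω ∈ {ω : ZMod n → Bool | ∀ v ∈ e, ω v = true} from hcond)]; norm_num
        · rw [if_neg hcond, Set.indicator_of_notMem (show ω ∉ {ω : ZMod n → Bool | ∀ v ∈ e, ω v = true} from hcond), add_zero]
      rw [hind, lintegral_add_left measurable_const, lintegral_one, measure_univ,
        lintegral_indicator MeasurableSet.of_discrete, setLIntegral_const, ← hpi,
        binomMeasure_cyl hp1 e, hunif e he, ← ENNReal.ofReal_pow hp0, ← hq, mul_comm]
    have hintle : ∫⁻ ω, f ω ∂binomMeasure n p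
        ≤ ((1 + 4 * ENNReal.ofReal q) ^ (1/(D:ℝ))) ^ F.card := by
      rw [hpi]
      calc ∫⁻ ω, f ω ∂(MeasureTheory.Measure.pi (fun _ : ZMod n => bernoulliMeasure p))
          = ∫⁻ ω, ∏ e ∈ F, g e ω
            ∂(MeasureTheory.Measure.pi (fun _ : ZMod n => bernoulliMeasure p)) := by
            simp_rw [hprod]
        _ ≤ ∏ e ∈ F, (∫⁻ ω, g e ω ^ (D:ℝ)
            ∂(MeasureTheory.Measure.pi (fun _ : ZMod n => bernoulliMeasure p))) ^ (1/(D:ℝ)) :=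
            hfinner
        _ = _ := by
            rw [Finset.prod_congr rfl (fun e he => by rw [hcylint e he]), Finset.prod_const]
    refine hmarkov.trans ?_
    refine le_trans (ENNReal.div_le_div_right hintle c) ?_
    have e1 : (1:ℝ≥0∞) + 4 * ENNReal.ofReal q = ENNReal.ofReal (1 + 4*q) := by
      rw [ENNReal.ofReal_add (by norm_num) (by positivity), ENNReal.ofReal_one,
        ENNReal.ofReal_mul (by norm_num), ENNReal.ofReal_ofNat]
    have e2 : ((1 + 4 * ENNReal.ofReal q) ^ (1/(D:ℝ))) ^ F.card
        = ENNReal.ofReal ((1 + 4*q) ^ ((F.card : ℝ)/D)) := by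
      rw [e1, ENNReal.ofReal_rpow_of_pos (by positivity), ← ENNReal.ofReal_pow (by positivity),
        ← Real.rpow_natCast ((1+4*q) ^ (1/(D:ℝ))) F.card, ← Real.rpow_mul (by positivity)]
      congr 2
      ring
    have e3 : c = ENNReal.ofReal ((5:ℝ) ^ ((A/D):ℝ)) := by
      rw [hc, ← ENNReal.ofReal_ofNat, ENNReal.ofReal_rpow_of_pos (by norm_num)]
    rw [e2, e3, ← ENNReal.ofReal_div_of_pos (by positivity)]
    refine ENNReal.ofReal_le_ofReal ?_
    have hcount : (F.card : ℝ) * ℓ ≤ (n:ℝ) * D := by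
      exact_mod_cast count_edges F hunif hdeg
    have hre := real_est n ℓ D F.card hn hℓ hD1 q hq0 hcount
    simpa [hA, hq] using hre
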